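/- Let W be a nonempty convex subset of ℝ^N, let R : ℝ^N → ℝ be convex and differentiable on an open set containing W, and let g_1, …, g_T ∈ ℝ^N. For t = 1, …, T+1 define Φ_t(w) = ⟨w, Σ_{s<t} g_s⟩ + R(w), and suppose w_t ∈ W is a minimizer of Φ_t over W for every t. Then for every w* ∈ W: Σ_{t=1}^T ⟨g_t, w_t − w*⟩ ≤ R(w*) − R(w_1) + Σ_{t=1}^T ( ⟨g_t, w_t − w_{t+1}⟩ − D_R(w_{t+1}, w_t) ). -/

import Mathlib

open Finset

lemma first_order_opt {E : Type*} [NormedAddCommGroup E] [InnerProductSpace ℝ E]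
    {W : Set E} (hW : Convex ℝ W) {f : E → ℝ} {x : E} (hx : x ∈ W)
    (hdf : DifferentiableAt ℝ f x) (hmin : ∀ q ∈ W, f x ≤ f q)
    {q : E} (hq : q ∈ W) : 0 ≤ fderiv ℝ f x (q - x) := by
  have hmin' : IsLocalMinOn f W x := (isMinOn_iff.2 hmin).localize
  exact hmin'.hasFDerivWithinAt_nonneg hdf.hasFDerivAt.hasFDerivWithinAt
    (sub_mem_posTangentConeAt_of_segment_subset (hW.segment_subset hx hq))

/-- **FTRL first-order regret bound.**
With `w t` the FTRL iterates (0-indexed: `w t` is the paper's `w_{t+1}`) for losses `g` with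
convex regularizer `R` over a nonempty convex set `W`, for every `w* ∈ W`:
`∑_{t<T} ⟨g t, w t − w*⟩ ≤ R w* − R (w 0) + ∑_{t<T} (⟨g t, w t − w (t+1)⟩ − D_R(w (t+1), w t))`. -/
theorem ftrl_first_order_regret {N : ℕ}
    (W : Set (EuclideanSpace ℝ (Fin N))) (hWne : W.Nonempty) (hWconv : Convex ℝ W)
    (R : EuclideanSpace ℝ (Fin N) → ℝ)
    (U : Set (EuclideanSpace ℝ (Fin N))) (hUopen : IsOpen U) (hWU : W ⊆ U)
    (hRconv : ConvexOn ℝ U R) (hRdiff : ∀ x ∈ U, DifferentiableAt ℝ R x)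
    (T : ℕ) (g : ℕ → EuclideanSpace ℝ (Fin N)) (w : ℕ → EuclideanSpace ℝ (Fin N))
    (hwW : ∀ t ≤ T, w t ∈ W)
    (hwmin : ∀ t ≤ T, ∀ q ∈ W,
      (inner ℝ (w t) (∑ s ∈ Finset.range t, g s) : ℝ) + R (w t)
        ≤ (inner ℝ q (∑ s ∈ Finset.range t, g s) : ℝ) + R q)
    (wstar : EuclideanSpace ℝ (Fin N)) (hws : wstar ∈ W) :
    ∑ t ∈ Finset.range T, (inner ℝ (g t) (w t - wstar) : ℝ)
      ≤ R wstar - R (w 0)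
        + ∑ t ∈ Finset.range T,
            ((inner ℝ (g t) (w t - w (t + 1)) : ℝ)
              - (R (w (t + 1)) - R (w t)
                  - (inner ℝ (gradient R (w t)) (w (t + 1) - w t) : ℝ))) := by
  set G : ℕ → EuclideanSpace ℝ (Fin N) := fun t => ∑ s ∈ Finset.range t, g s with hG
  set f : ℕ → EuclideanSpace ℝ (Fin N) → ℝ := fun t q => (inner ℝ q (G t) : ℝ) + R q with hf
  -- first-order optimality
  have opt : ∀ t < T, (0:ℝ) ≤ (inner ℝ (G t) (w (t+1) - w t) : ℝ)
      + (inner ℝ (gradient R (w t)) (w (t+1) - w t) : ℝ) := by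
    intro t ht
    have hwt : w t ∈ U := hWU (hwW t ht.le)
    have hR : DifferentiableAt ℝ R (w t) := hRdiff _ hwt
    have hlin : HasFDerivAt (fun q : EuclideanSpace ℝ (Fin N) => (inner ℝ q (G t) : ℝ))
        (innerSL ℝ (G t)) (w t) := by
      have : (fun q : EuclideanSpace ℝ (Fin N) => (inner ℝ q (G t) : ℝ))
          = fun q => innerSL ℝ (G t) q := by
        funext q; rw [innerSL_apply_apply, real_inner_comm]
      rw [this]
      exact (innerSL ℝ (G t)).hasFDerivAt
    have hft : HasFDerivAt (f t) (innerSL ℝ (G t) + fderiv ℝ R (w t)) (w t) :=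
      hlin.add hR.hasFDerivAt
    have h0 : 0 ≤ (innerSL ℝ (G t) + fderiv ℝ R (w t)) (w (t+1) - w t) := by
      have := first_order_opt hWconv (hwW t ht.le) hft.differentiableAt
        (fun q hq => hwmin t ht.le q hq) (hwW (t+1) ht)
      rwa [hft.fderiv] at this
    have hgrad : fderiv ℝ R (w t) (w (t+1) - w t)
        = (inner ℝ (gradient R (w t)) (w (t+1) - w t) : ℝ) := by
      have := hR.hasGradientAt
      rw [hasGradientAt_iff_hasFDerivAt] at this
      rw [this.fderiv, InnerProductSpace.toDual_apply_apply]
    rw [ContinuousLinearMap.add_apply, innerSL_apply_apply, hgrad] at h0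
    exact h0
  -- per-term inequality
  have step : ∀ t < T, f (t+1) (w t) - f (t+1) (w (t+1))
      ≤ (inner ℝ (g t) (w t - w (t + 1)) : ℝ)
          - (R (w (t + 1)) - R (w t)
              - (inner ℝ (gradient R (w t)) (w (t + 1) - w t) : ℝ)) := by
    intro t ht
    have h := opt t ht
    have hGsucc : G (t+1) = G t + g t := by simp [hG, Finset.sum_range_succ]
    simp only [hf, hGsucc, inner_add_right, inner_sub_right, inner_sub_left] at *
    have e1 : (inner ℝ (G t) (w (t+1)) : ℝ) = inner ℝ (w (t+1)) (G t) := real_inner_comm _ _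
    have e2 : (inner ℝ (G t) (w t) : ℝ) = inner ℝ (w t) (G t) := real_inner_comm _ _
    have e3 : (inner ℝ (g t) (w t) : ℝ) = inner ℝ (w t) (g t) := real_inner_comm _ _
    have e4 : (inner ℝ (g t) (w (t+1)) : ℝ) = inner ℝ (w (t+1)) (g t) := real_inner_comm _ _
    linarith
  -- telescoping identity
  have tele : ∑ t ∈ Finset.range T, (inner ℝ (w t) (g t) : ℝ)
      = f T (w T) - f 0 (w 0)
        + ∑ t ∈ Finset.range T, (f (t+1) (w t) - f (t+1) (w (t+1))) := by
    have h1 : ∑ t ∈ Finset.range T, ((f (t+1) (w (t+1)) - f t (w t))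
          + (f (t+1) (w t) - f (t+1) (w (t+1))))
        = f T (w T) - f 0 (w 0)
          + ∑ t ∈ Finset.range T, (f (t+1) (w t) - f (t+1) (w (t+1))) := by
      rw [Finset.sum_add_distrib, Finset.sum_range_sub (fun t => f t (w t))]
    rw [← h1]
    apply Finset.sum_congr rfl
    intro t _
    have hGsucc : G (t+1) = G t + g t := by simp [hG, Finset.sum_range_succ]
    simp only [hf, hGsucc, inner_add_right]
    ring
  -- rewrite LHS
  have lhs_eq : ∑ t ∈ Finset.range T, (inner ℝ (g t) (w t - wstar) : ℝ)
      = ∑ t ∈ Finset.range T, (inner ℝ (w t) (g t) : ℝ) - (inner ℝ wstar (G T) : ℝ) := by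
    rw [hG, inner_sum, ← Finset.sum_sub_distrib]
    apply Finset.sum_congr rfl
    intro t _
    rw [inner_sub_right, real_inner_comm (g t) (w t), real_inner_comm (g t) wstar]
  have hmin := hwmin T le_rfl wstar hws
  have hsum : ∑ t ∈ Finset.range T, (f (t+1) (w t) - f (t+1) (w (t+1)))
      ≤ ∑ t ∈ Finset.range T,
          ((inner ℝ (g t) (w t - w (t + 1)) : ℝ)
            - (R (w (t + 1)) - R (w t)
                - (inner ℝ (gradient R (w t)) (w (t + 1) - w t) : ℝ))) :=
    Finset.sum_le_sum (fun t ht => step t (Finset.mem_range.1 ht))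
  have hf0 : f 0 (w 0) = R (w 0) := by simp [hf, hG]
  have hfT : f T (w T) = (inner ℝ (w T) (G T) : ℝ) + R (w T) := rfl
  rw [lhs_eq, tele, hf0]
  have : f T (w T) ≤ (inner ℝ wstar (G T) : ℝ) + R wstar := hmin
  linarith
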